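/- Let K ≥ 1, let H_1, …, H_K be real symmetric positive definite n×n matrices with λ = max_k λ_max(H_k), let π_1, …, π_K be nonnegative reals with ∑_k π_k = 1, let w_1, …, w_K ∈ ℝ^n, and set Δ_max = max_{j,k} ‖w_j − w_k‖. For each k define the quadratic task loss L_k(w) = c_k + (1/2)(w − w_k)^T H_k (w − w_k) with c_k ∈ ℝ. Then the merged model w* = (∑_k π_k H_k)^{−1}(∑_k π_k H_k w_k) satisfies ∑_k π_k L_k(w*) ≤ ∑_k π_k c_k + (1/2)·λ·Δ_max². -/

import Mathlib

open Matrix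

/-- The largest eigenvalue of a real symmetric (Hermitian) matrix (junk value `0` if the
matrix is not Hermitian). -/
noncomputable def eigMax {n : ℕ} (A : Matrix (Fin n) (Fin n) ℝ) : ℝ :=
  if h : A.IsHermitian then ⨆ i, h.eigenvalues i else 0

lemma herm_transpose {m : ℕ} {M : Matrix (Fin m) (Fin m) ℝ} (hM : M.IsHermitian) : Mᵀ = M := by
  have := hM; rwa [Matrix.IsHermitian, conjTranspose_eq_transpose_of_trivial] at this

lemma sym_dot {m : ℕ} {M : Matrix (Fin m) (Fin m) ℝ} (hM : M.IsHermitian)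
    (x y : Fin m → ℝ) : x ⬝ᵥ M *ᵥ y = y ⬝ᵥ M *ᵥ x := by
  rw [dotProduct_mulVec, dotProduct_comm, ← mulVec_transpose, herm_transpose hM]

lemma sub_posSemidef {m : ℕ} {M : Matrix (Fin m) (Fin m) ℝ} (hM : M.IsHermitian)
    {c : ℝ} (hc : ∀ i, hM.eigenvalues i ≤ c) :
    (c • (1 : Matrix (Fin m) (Fin m) ℝ) - M).PosSemidef := by
  set U : Matrix (Fin m) (Fin m) ℝ := (hM.eigenvectorUnitary : Matrix (Fin m) (Fin m) ℝ) with hUdef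
  have hU : U * star U = 1 := (Matrix.mem_unitaryGroup_iff).mp hM.eigenvectorUnitary.2
  have hdiag : diagonal (fun i => c - hM.eigenvalues i)
      = c • (1 : Matrix (Fin m) (Fin m) ℝ) - diagonal (RCLike.ofReal ∘ hM.eigenvalues) := by
    ext i j
    by_cases h : i = j <;> simp [h, Matrix.diagonal_apply, Matrix.one_apply]
  have key : c • (1 : Matrix (Fin m) (Fin m) ℝ) - M
      = U * diagonal (fun i => c - hM.eigenvalues i) * Uᴴ := by
    rw [hdiag, Matrix.mul_sub, Matrix.sub_mul, ← star_eq_conjTranspose,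
      mul_smul_comm, Matrix.smul_mul, mul_one, hU, hUdef]
    exact congrArg (c • (1 : Matrix (Fin m) (Fin m) ℝ) - ·) hM.spectral_theorem
  rw [key]
  exact (Matrix.PosSemidef.diagonal
    (by intro i; simp [sub_nonneg, hc i])).mul_mul_conjTranspose_same _

lemma rayleigh {m : ℕ} {M : Matrix (Fin m) (Fin m) ℝ} (hM : M.IsHermitian)
    (x : Fin m → ℝ) : x ⬝ᵥ M *ᵥ x ≤ eigMax M * (x ⬝ᵥ x) := by
  have hc : ∀ i, hM.eigenvalues i ≤ eigMax M := by
    intro i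
    rw [eigMax, dif_pos hM]
    exact le_ciSup (Set.Finite.bddAbove (Set.finite_range _)) i
  have h := (sub_posSemidef hM hc).dotProduct_mulVec_nonneg x
  simp only [star_trivial, Matrix.sub_mulVec, Matrix.smul_mulVec, Matrix.one_mulVec,
    dotProduct_sub, dotProduct_smul, smul_eq_mul] at h
  linarith

lemma sum_mulVec' {m K : ℕ} (M : Fin K → Matrix (Fin m) (Fin m) ℝ) (v : Fin m → ℝ) :
    (∑ k, M k) *ᵥ v = ∑ k, M k *ᵥ v := by
  ext i
  simp [Matrix.mulVec, dotProduct, Finset.sum_apply, Matrix.sum_apply, Finset.sum_mul]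
  rw [Finset.sum_comm]

lemma dotProduct_sum' {m K : ℕ} (x : Fin m → ℝ) (f : Fin K → (Fin m → ℝ)) :
    x ⬝ᵥ (∑ k, f k) = ∑ k, x ⬝ᵥ f k := by
  simp [dotProduct, Finset.sum_apply, Finset.mul_sum]
  rw [Finset.sum_comm]

lemma eigMax_nonneg {m : ℕ} {M : Matrix (Fin m) (Fin m) ℝ} (hM : M.PosDef) :
    0 ≤ eigMax M := by
  rw [eigMax, dif_pos hM.1]
  rcases Nat.eq_zero_or_pos m with h | h
  · subst h
    rw [iSup, Set.range_eq_empty, Real.sSup_empty]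
  · exact le_trans (hM.eigenvalues_pos ⟨0, h⟩).le
      (le_ciSup (Set.Finite.bddAbove (Set.finite_range _)) _)

/-- With quadratic task losses `L_k(v) = c_k + (1/2)(v - w_k)ᵀ H_k (v - w_k)`,
positive definite Hessians with `λ = max_k λ_max(H_k)`, nonnegative weights `π` summing to 1,
and `Δ_max = max_{j,k} ‖w_j - w_k‖` (Euclidean norm), the curvature-aware merged model
`w* = (∑ k, π k • H k)⁻¹ (∑ k, π k • H k (w k))` satisfies
`∑ k, π k * L_k(w*) ≤ ∑ k, π k * c k + (1/2) * λ * Δ_max²`. -/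
theorem merging_quality_guarantee {n K : ℕ} (hK : 1 ≤ K)
    (H : Fin K → Matrix (Fin n) (Fin n) ℝ) (hH : ∀ k, (H k).PosDef)
    (lam : ℝ) (hlam : lam = ⨆ k, eigMax (H k))
    (π : Fin K → ℝ) (hπ : ∀ k, 0 ≤ π k) (hπsum : ∑ k, π k = 1)
    (w : Fin K → (Fin n → ℝ)) (c : Fin K → ℝ)
    (Δmax : ℝ)
    (hΔ : Δmax = ⨆ j, ⨆ k, Real.sqrt (∑ i, (w j i - w k i) ^ 2)) :
    ∑ k, π k * (c k + (1 / 2) * dotProduct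
        ((∑ k', π k' • H k')⁻¹.mulVec (∑ k', π k' • (H k').mulVec (w k')) - w k)
        ((H k).mulVec
          ((∑ k', π k' • H k')⁻¹.mulVec (∑ k', π k' • (H k').mulVec (w k')) - w k)))
      ≤ ∑ k, π k * c k + (1 / 2) * lam * Δmax ^ 2 := by
  classical
  set A : Matrix (Fin n) (Fin n) ℝ := ∑ k', π k' • H k' with hA
  set b : Fin n → ℝ := ∑ k', π k' • (H k').mulVec (w k') with hb
  set ws : Fin n → ℝ := A⁻¹.mulVec b with hws
  have k0 : Fin K := ⟨0, hK⟩
  have hHh : ∀ k, (H k).IsHermitian := fun k => (hH k).1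
  have hAh : A.IsHermitian := by
    rw [hA, Matrix.IsHermitian, conjTranspose_sum]
    refine Finset.sum_congr rfl fun k _ => ?_
    rw [conjTranspose_smul, star_trivial, (hHh k)]
  have hexists : ∃ k, 0 < π k := by
    by_contra h
    push_neg at h
    have h0 : ∑ k, π k = 0 :=
      Finset.sum_eq_zero fun k _ => le_antisymm (h k) (hπ k)
    rw [hπsum] at h0
    norm_num at h0
  -- quadratic form of A
  have hAquad : ∀ x : Fin n → ℝ, x ⬝ᵥ A *ᵥ x = ∑ k, π k * (x ⬝ᵥ (H k) *ᵥ x) := by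
    intro x
    rw [hA, sum_mulVec', dotProduct_sum']
    refine Finset.sum_congr rfl fun k _ => ?_
    rw [Matrix.smul_mulVec, dotProduct_smul, smul_eq_mul]
  have hbquad : ∀ x : Fin n → ℝ, x ⬝ᵥ b = ∑ k, π k * (x ⬝ᵥ (H k) *ᵥ w k) := by
    intro x
    rw [hb, dotProduct_sum']
    refine Finset.sum_congr rfl fun k _ => ?_
    rw [dotProduct_smul, smul_eq_mul]
  have hApos : A.PosDef := by
    refine .of_dotProduct_mulVec_pos hAh fun x hx => ?_
    obtain ⟨k1, hk1⟩ := hexists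
    rw [star_trivial, hAquad x]
    refine Finset.sum_pos' (fun k _ => ?_) ⟨k1, Finset.mem_univ _, ?_⟩
    · have h2 := ((hH k).posSemidef).dotProduct_mulVec_nonneg x
      rw [star_trivial] at h2
      exact mul_nonneg (hπ k) h2
    · have h2 := (hH k1).dotProduct_mulVec_pos hx
      rw [star_trivial] at h2
      exact mul_pos hk1 h2
  have hAws : A *ᵥ ws = b := by
    rw [hws, Matrix.mulVec_mulVec, Matrix.mul_nonsing_inv _ hApos.det_pos.ne'.isUnit,
      Matrix.one_mulVec]
  -- expansion of the weighted quadratic loss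
  set f : (Fin n → ℝ) → ℝ := fun v => ∑ k, π k * ((v - w k) ⬝ᵥ (H k) *ᵥ (v - w k)) with hf
  set C : ℝ := ∑ k, π k * (w k ⬝ᵥ (H k) *ᵥ w k) with hC
  have hexpand : ∀ v, f v = (v ⬝ᵥ A *ᵥ v) - 2 * (v ⬝ᵥ b) + C := by
    intro v
    have hterm : ∀ k, π k * ((v - w k) ⬝ᵥ (H k) *ᵥ (v - w k))
        = π k * (v ⬝ᵥ (H k) *ᵥ v) - 2 * (π k * (v ⬝ᵥ (H k) *ᵥ w k))
          + π k * (w k ⬝ᵥ (H k) *ᵥ w k) := by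
      intro k
      have hs : w k ⬝ᵥ (H k) *ᵥ v = v ⬝ᵥ (H k) *ᵥ w k := sym_dot (hHh k) _ _
      rw [sub_dotProduct, Matrix.mulVec_sub, dotProduct_sub, dotProduct_sub, hs]
      ring
    rw [hf]
    simp only [hterm]
    rw [Finset.sum_add_distrib, Finset.sum_sub_distrib, ← Finset.mul_sum,
      ← hAquad v, ← hbquad v, hC]
  have hmin : ∀ v, f ws ≤ f v := by
    intro v
    have hposA := hApos.posSemidef.dotProduct_mulVec_nonneg (v - ws)
    rw [star_trivial] at hposA
    have e1 : (v - ws) ⬝ᵥ A *ᵥ (v - ws)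
        = (v ⬝ᵥ A *ᵥ v) - 2 * (v ⬝ᵥ b) + (ws ⬝ᵥ b) := by
      have hs : ws ⬝ᵥ A *ᵥ v = v ⬝ᵥ A *ᵥ ws := sym_dot hAh _ _
      rw [sub_dotProduct, Matrix.mulVec_sub, dotProduct_sub, dotProduct_sub, hs, hAws]
      ring
    have e2 : ws ⬝ᵥ A *ᵥ ws = ws ⬝ᵥ b := by rw [hAws]
    have h1 := hexpand v
    have h2 := hexpand ws
    rw [e1] at hposA
    rw [e2] at h2
    linarith
  -- diversity bound
  have hΔnn : ∀ j k, Real.sqrt (∑ i, (w j i - w k i) ^ 2) ≤ Δmax := by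
    intro j k
    rw [hΔ]
    calc Real.sqrt (∑ i, (w j i - w k i) ^ 2)
        ≤ ⨆ k', Real.sqrt (∑ i, (w j i - w k' i) ^ 2) :=
          le_ciSup (f := fun k' => Real.sqrt (∑ i, (w j i - w k' i) ^ 2))
            (Set.Finite.bddAbove (Set.finite_range _)) k
      _ ≤ ⨆ j', ⨆ k', Real.sqrt (∑ i, (w j' i - w k' i) ^ 2) :=
          le_ciSup (f := fun j' => ⨆ k', Real.sqrt (∑ i, (w j' i - w k' i) ^ 2))
            (Set.Finite.bddAbove (Set.finite_range _)) j
  have hΔ0 : 0 ≤ Δmax := le_trans (Real.sqrt_nonneg _) (hΔnn k0 k0)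
  have hdist : ∀ j k, (w j - w k) ⬝ᵥ (w j - w k) ≤ Δmax ^ 2 := by
    intro j k
    have hsum : (w j - w k) ⬝ᵥ (w j - w k) = ∑ i, (w j i - w k i) ^ 2 := by
      simp [dotProduct, pow_two]
    rw [hsum, ← Real.sq_sqrt (Finset.sum_nonneg fun i _ => sq_nonneg _)]
    exact pow_le_pow_left₀ (Real.sqrt_nonneg _) (hΔnn j k) 2
  have hlamk : ∀ k, eigMax (H k) ≤ lam := by
    intro k
    rw [hlam]
    exact le_ciSup (f := fun k => eigMax (H k)) (Set.Finite.bddAbove (Set.finite_range _)) k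
  have hlam0 : 0 ≤ lam := le_trans (eigMax_nonneg (hH k0)) (hlamk k0)
  -- bound f (w k0)
  have hfb : f (w k0) ≤ lam * Δmax ^ 2 := by
    rw [hf]
    calc ∑ k, π k * ((w k0 - w k) ⬝ᵥ (H k) *ᵥ (w k0 - w k))
        ≤ ∑ k, π k * (lam * Δmax ^ 2) := by
          refine Finset.sum_le_sum fun k _ => mul_le_mul_of_nonneg_left ?_ (hπ k)
          have r1 := rayleigh (hHh k) (w k0 - w k)
          have r2 : eigMax (H k) * ((w k0 - w k) ⬝ᵥ (w k0 - w k))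
              ≤ lam * ((w k0 - w k) ⬝ᵥ (w k0 - w k)) :=
            mul_le_mul_of_nonneg_right (hlamk k) (by
              refine Finset.sum_nonneg fun i _ => mul_self_nonneg _)
          have r3 : lam * ((w k0 - w k) ⬝ᵥ (w k0 - w k)) ≤ lam * Δmax ^ 2 :=
            mul_le_mul_of_nonneg_left (hdist k0 k) hlam0
          linarith
      _ = lam * Δmax ^ 2 := by rw [← Finset.sum_mul, hπsum, one_mul]
  have hfws : f ws ≤ lam * Δmax ^ 2 := le_trans (hmin (w k0)) hfb
  -- final assembly
  have hsplit : ∑ k, π k * (c k + (1 / 2) * ((ws - w k) ⬝ᵥ (H k) *ᵥ (ws - w k)))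
      = ∑ k, π k * c k + (1 / 2) * f ws := by
    rw [hf, Finset.mul_sum, ← Finset.sum_add_distrib]
    refine Finset.sum_congr rfl fun k _ => ?_
    ring
  calc ∑ k, π k * (c k + (1 / 2) * ((ws - w k) ⬝ᵥ (H k) *ᵥ (ws - w k)))
      = ∑ k, π k * c k + (1 / 2) * f ws := hsplit
    _ ≤ ∑ k, π k * c k + (1 / 2) * (lam * Δmax ^ 2) := by linarith
    _ = ∑ k, π k * c k + (1 / 2) * lam * Δmax ^ 2 := by ring
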